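/- Let (V^j, d^j)_{j=0}^{n} be a cochain complex of finite-dimensional complex inner product spaces, with Laplacians Δ_j = (d^j)* d^j + d^{j−1} (d^{j−1})*. Then for every t > 0 and every integer N with 0 ≤ N ≤ n, ∑_{j=0}^{N} (−1)^{N−j} Tr(exp(−t Δ_j)) ≥ ∑_{j=0}^{N} (−1)^{N−j} dim ker Δ_j. -/

import Mathlib

open scoped ComplexOrder

/-- The Hodge Laplacians `Δ_j = (d^j)* d^j + d^{j-1} (d^{j-1})*` of a cochain complex
`(V^j, d^j)` of finite-dimensional complex inner product spaces, with the conventions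
`d^{-1} = 0` (so that `Δ_0 = (d^0)* d^0`). -/
noncomputable def hodgeLaplacian (V : ℕ → Type*) [∀ j, NormedAddCommGroup (V j)]
    [∀ j, InnerProductSpace ℂ (V j)] [∀ j, FiniteDimensional ℂ (V j)]
    (d : ∀ j, V j →ₗ[ℂ] V (j + 1)) : ∀ j, V j →ₗ[ℂ] V j :=
  fun j => match j with
  | 0 => (LinearMap.adjoint (d 0)).comp (d 0)
  | j + 1 => (LinearMap.adjoint (d (j + 1))).comp (d (j + 1)) +
      (d j).comp (LinearMap.adjoint (d j))

/-- The heat trace `Tr (exp (−t Δ_j))` of the `j`-th Hodge Laplacian. -/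
noncomputable def heatTrace (V : ℕ → Type*) [∀ j, NormedAddCommGroup (V j)]
    [∀ j, InnerProductSpace ℂ (V j)] [∀ j, FiniteDimensional ℂ (V j)]
    (d : ∀ j, V j →ₗ[ℂ] V (j + 1)) (t : ℝ) (j : ℕ) : ℂ :=
  LinearMap.trace ℂ (V j)
    (NormedSpace.exp
      ((-(t : ℂ)) • (LinearMap.toContinuousLinearMap (hodgeLaplacian V d j)))).toLinearMap

open scoped InnerProductSpace
open Module NormedSpace LinearMap

set_option linter.unusedSectionVars false
set_option maxHeartbeats 1000000

namespace HeatAux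

variable {E F G : Type*}
  [NormedAddCommGroup E] [InnerProductSpace ℂ E] [FiniteDimensional ℂ E]
  [NormedAddCommGroup F] [InnerProductSpace ℂ F] [FiniteDimensional ℂ F]
  [NormedAddCommGroup G] [InnerProductSpace ℂ G] [FiniteDimensional ℂ G]

noncomputable def htr (t : ℝ) (T : E →ₗ[ℂ] E) : ℂ :=
  LinearMap.trace ℂ E
    (NormedSpace.exp ((-(t : ℂ)) • (LinearMap.toContinuousLinearMap T))).toLinearMap

noncomputable def gram (A : E →ₗ[ℂ] F) : E →ₗ[ℂ] E := (LinearMap.adjoint A).comp A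

lemma exp_apply_eigen (X : E →L[ℂ] E) (v : E) (μ : ℂ) (h : X v = μ • v) :
    NormedSpace.exp X v = Complex.exp μ • v := by
  have hpow : ∀ k : ℕ, (X ^ k) v = μ ^ k • v := by
    intro k
    induction k with
    | zero => simp
    | succ k ih =>
        rw [pow_succ', pow_succ']
        simp only [ContinuousLinearMap.mul_apply, ih, map_smul, h, smul_smul, mul_comm]
  have hs : Summable fun n : ℕ => ((n.factorial : ℂ))⁻¹ • X ^ n := NormedSpace.expSeries_summable' X
  have happ : NormedSpace.exp X v = ∑' n : ℕ, ((n.factorial : ℂ))⁻¹ • (X ^ n) v := by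
    rw [NormedSpace.exp_eq_tsum ℂ]
    simpa using (ContinuousLinearMap.apply ℂ E v).map_tsum hs
  rw [happ]
  have hsum : Summable fun n : ℕ => ((n.factorial : ℂ))⁻¹ * μ ^ n := by
    simpa [smul_eq_mul] using NormedSpace.expSeries_summable' (𝕂 := ℂ) μ
  calc ∑' n : ℕ, ((n.factorial : ℂ))⁻¹ • (X ^ n) v
      = ∑' n : ℕ, (((n.factorial : ℂ))⁻¹ * μ ^ n) • v := by
        refine tsum_congr fun n => ?_
        rw [hpow n, smul_smul]
    _ = (∑' n : ℕ, ((n.factorial : ℂ))⁻¹ * μ ^ n) • v := Summable.tsum_smul_const hsum v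
    _ = Complex.exp μ • v := by
        congr 1
        rw [Complex.exp_eq_exp_ℂ, NormedSpace.exp_eq_tsum ℂ]
        simp [smul_eq_mul]


lemma trace_eq_sum_inner {ι : Type*} [Fintype ι] [DecidableEq ι] (b : OrthonormalBasis ι ℂ E)
    (T : E →ₗ[ℂ] E) : LinearMap.trace ℂ E T = ∑ i, ⟪b i, T (b i)⟫_ℂ := by
  rw [LinearMap.trace_eq_matrix_trace ℂ b.toBasis T, Matrix.trace]
  refine Finset.sum_congr rfl fun i _ => ?_
  rw [Matrix.diag_apply, LinearMap.toMatrix_apply, OrthonormalBasis.coe_toBasis,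
    OrthonormalBasis.coe_toBasis_repr_apply, OrthonormalBasis.repr_apply_apply]


lemma inner_gram (A : E →ₗ[ℂ] F) (x y : E) : ⟪x, gram A y⟫_ℂ = ⟪A x, A y⟫_ℂ := by
  simp [gram, LinearMap.adjoint_inner_right]


lemma gram_isSymmetric (A : E →ₗ[ℂ] F) : (gram A).IsSymmetric := by
  intro x y
  simp only [gram, LinearMap.comp_apply, LinearMap.adjoint_inner_left,
    LinearMap.adjoint_inner_right]


lemma ker_gram (A : E →ₗ[ℂ] F) : LinearMap.ker (gram A) = LinearMap.ker A := by
  ext x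
  simp only [LinearMap.mem_ker]
  constructor
  · intro h
    have h2 : ⟪A x, A x⟫_ℂ = 0 := by rw [← inner_gram, h, inner_zero_right]
    exact inner_self_eq_zero.mp h2
  · intro h
    simp [gram, h]


lemma ker_adjoint (A : E →ₗ[ℂ] F) :
    LinearMap.ker (LinearMap.adjoint A) = (LinearMap.range A)ᗮ := by
  ext x
  simp only [LinearMap.mem_ker, Submodule.mem_orthogonal]
  constructor
  · rintro h u ⟨y, rfl⟩
    rw [← LinearMap.adjoint_inner_right, h, inner_zero_right]
  · intro h
    have : ⟪LinearMap.adjoint A x, LinearMap.adjoint A x⟫_ℂ = 0 := by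
      rw [LinearMap.adjoint_inner_right]
      exact h _ ⟨_, rfl⟩
    exact inner_self_eq_zero.mp this


lemma comp_adjoint_eq_gram (A : E →ₗ[ℂ] F) :
    A.comp (LinearMap.adjoint A) = gram (LinearMap.adjoint A) := by
  rw [gram, LinearMap.adjoint_adjoint]


lemma finrank_ker_gram_add_rank (A : E →ₗ[ℂ] F) :
    finrank ℂ (LinearMap.ker (gram A)) + finrank ℂ (LinearMap.range A) = finrank ℂ E := by
  rw [ker_gram, add_comm]
  exact LinearMap.finrank_range_add_finrank_ker A


lemma finrank_ker_gram_adjoint_add_rank (A : E →ₗ[ℂ] F) :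
    finrank ℂ (LinearMap.ker (gram (LinearMap.adjoint A))) + finrank ℂ (LinearMap.range A) =
      finrank ℂ F := by
  rw [ker_gram, ker_adjoint, add_comm,
    ← Submodule.finrank_add_finrank_orthogonal (K := LinearMap.range A)]


instance : FiniteDimensional ℂ (E →L[ℂ] E) :=
  LinearEquiv.finiteDimensional
    (LinearMap.toContinuousLinearMap : (E →ₗ[ℂ] E) ≃ₗ[ℂ] (E →L[ℂ] E))

/-- The trace, as a continuous linear functional on continuous endomorphisms. -/
noncomputable def trCLM (E : Type*) [NormedAddCommGroup E] [InnerProductSpace ℂ E]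
    [FiniteDimensional ℂ E] : (E →L[ℂ] E) →L[ℂ] ℂ :=
  LinearMap.toContinuousLinearMap ((LinearMap.trace ℂ E).comp (ContinuousLinearMap.coeLM ℂ))

@[simp] lemma trCLM_apply (X : E →L[ℂ] E) :
    trCLM E X = LinearMap.trace ℂ E X.toLinearMap := rfl

lemma coe_clm_pow (X : E →L[ℂ] E) (n : ℕ) : (X ^ n).toLinearMap = X.toLinearMap ^ n :=
  map_pow (ContinuousLinearMap.toLinearMapRingHom (R₁ := ℂ) (M₁ := E)) X n

lemma htr_eq_tsum (t : ℝ) (T : E →ₗ[ℂ] E) :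
    htr t T = ∑' n : ℕ, ((n.factorial : ℂ))⁻¹ * (-(t : ℂ)) ^ n *
      LinearMap.trace ℂ E (T ^ n) := by
  have hs : Summable fun n : ℕ => ((n.factorial : ℂ))⁻¹ •
      ((-(t : ℂ)) • LinearMap.toContinuousLinearMap T) ^ n :=
    NormedSpace.expSeries_summable' _
  have h1 : htr t T = trCLM E (NormedSpace.exp
      ((-(t : ℂ)) • LinearMap.toContinuousLinearMap T)) := rfl
  rw [h1, NormedSpace.exp_eq_tsum ℂ, (trCLM E).map_tsum hs]
  refine tsum_congr fun n => ?_
  rw [map_smul, trCLM_apply, smul_pow, ContinuousLinearMap.coe_smul, coe_clm_pow]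
  have h2 : (LinearMap.toContinuousLinearMap T).toLinearMap = T := rfl
  rw [h2, map_smul, smul_eq_mul, smul_eq_mul, mul_assoc]

lemma summable_tr_series (t : ℝ) (T : E →ₗ[ℂ] E) :
    Summable fun n : ℕ => ((n.factorial : ℂ))⁻¹ * (-(t : ℂ)) ^ n *
      LinearMap.trace ℂ E (T ^ n) := by
  have hs : Summable fun n : ℕ => ((n.factorial : ℂ))⁻¹ •
      ((-(t : ℂ)) • LinearMap.toContinuousLinearMap T) ^ n :=
    NormedSpace.expSeries_summable' _
  have := hs.mapL (trCLM E)
  refine this.congr fun n => ?_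
  rw [map_smul, trCLM_apply, smul_pow, ContinuousLinearMap.coe_smul, coe_clm_pow]
  have h2 : (LinearMap.toContinuousLinearMap T).toLinearMap = T := rfl
  rw [h2, map_smul, smul_eq_mul, smul_eq_mul, mul_assoc]

lemma gram_pow_succ (A : E →ₗ[ℂ] F) (n : ℕ) :
    gram A ^ (n + 1) =
      (LinearMap.adjoint A).comp (((A.comp (LinearMap.adjoint A)) ^ n).comp A) := by
  induction n with
  | zero => simp [gram, pow_one, Module.End.one_eq_id]
  | succ n ih =>
      rw [pow_succ (gram A) (n + 1), ih, pow_succ (A.comp (LinearMap.adjoint A)) n]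
      simp only [Module.End.mul_eq_comp, gram, LinearMap.comp_assoc]

lemma trace_gram_pow_succ (A : E →ₗ[ℂ] F) (n : ℕ) :
    LinearMap.trace ℂ E (gram A ^ (n + 1)) =
      LinearMap.trace ℂ F ((A.comp (LinearMap.adjoint A)) ^ (n + 1)) := by
  rw [gram_pow_succ, LinearMap.trace_comp_comm', pow_succ (A.comp (LinearMap.adjoint A)) n]
  simp only [Module.End.mul_eq_comp, LinearMap.comp_assoc]

/-- The heat trace minus the dimension is the same for `A†A` and `AA†`. -/
lemma htr_sub_dim (t : ℝ) (A : E →ₗ[ℂ] F) :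
    htr t (gram A) - (finrank ℂ E : ℂ) =
      htr t (A.comp (LinearMap.adjoint A)) - (finrank ℂ F : ℂ) := by
  have h1 := htr_eq_tsum t (gram A)
  have h2 := htr_eq_tsum t (A.comp (LinearMap.adjoint A))
  have hsub : htr t (gram A) - htr t (A.comp (LinearMap.adjoint A)) =
      ∑' n : ℕ, (((n.factorial : ℂ))⁻¹ * (-(t : ℂ)) ^ n * LinearMap.trace ℂ E (gram A ^ n) -
        ((n.factorial : ℂ))⁻¹ * (-(t : ℂ)) ^ n *
          LinearMap.trace ℂ F ((A.comp (LinearMap.adjoint A)) ^ n)) := by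
    rw [h1, h2, Summable.tsum_sub (summable_tr_series t (gram A))
      (summable_tr_series t (A.comp (LinearMap.adjoint A)))]
  have hzero : ∀ n : ℕ, n ≠ 0 →
      (((n.factorial : ℂ))⁻¹ * (-(t : ℂ)) ^ n * LinearMap.trace ℂ E (gram A ^ n) -
        ((n.factorial : ℂ))⁻¹ * (-(t : ℂ)) ^ n *
          LinearMap.trace ℂ F ((A.comp (LinearMap.adjoint A)) ^ n)) = 0 := by
    intro n hn
    obtain ⟨k, rfl⟩ := Nat.exists_eq_succ_of_ne_zero hn
    rw [trace_gram_pow_succ, sub_self]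
  have := tsum_eq_single 0 hzero (L := SummationFilter.unconditional ℕ) (f := fun n : ℕ =>
      (((n.factorial : ℂ))⁻¹ * (-(t : ℂ)) ^ n * LinearMap.trace ℂ E (gram A ^ n) -
        ((n.factorial : ℂ))⁻¹ * (-(t : ℂ)) ^ n *
          LinearMap.trace ℂ F ((A.comp (LinearMap.adjoint A)) ^ n)))
  rw [this] at hsub
  simp only [pow_zero, Nat.factorial_zero, Nat.cast_one, inv_one, one_mul,
    LinearMap.trace_one] at hsub
  linear_combination hsub


section Eigen

variable {m : ℕ} {T : E →ₗ[ℂ] E} (hT : T.IsSymmetric) (hm : finrank ℂ E = m)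

lemma inner_basis_self (b : OrthonormalBasis (Fin m) ℂ E) (i : Fin m) :
    ⟪b i, b i⟫_ℂ = 1 := by
  rw [@inner_self_eq_norm_sq_to_K ℂ]
  simp [b.orthonormal.1 i]

lemma htr_eq_sum_exp (t : ℝ) :
    htr t T = ∑ i : Fin m, Complex.exp (-(t : ℂ) * (hT.eigenvalues hm i : ℂ)) := by
  classical
  rw [htr, trace_eq_sum_inner (hT.eigenvectorBasis hm)]
  refine Finset.sum_congr rfl fun i _ => ?_
  have heig : ((-(t : ℂ)) • (LinearMap.toContinuousLinearMap T)) (hT.eigenvectorBasis hm i) =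
      (-(t : ℂ) * (hT.eigenvalues hm i : ℂ)) • hT.eigenvectorBasis hm i := by
    have : (LinearMap.toContinuousLinearMap T) (hT.eigenvectorBasis hm i) =
        T (hT.eigenvectorBasis hm i) := rfl
    rw [ContinuousLinearMap.smul_apply, this, hT.apply_eigenvectorBasis hm i, smul_smul]
    rfl
  rw [ContinuousLinearMap.coe_coe, exp_apply_eigen _ _ _ heig, inner_smul_right,
    inner_basis_self, mul_one]

lemma finrank_ker_le_card (S : Finset (Fin m))
    (hS : ∀ i, hT.eigenvalues hm i = 0 → i ∈ S) :
    finrank ℂ (LinearMap.ker T) ≤ S.card := by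
  classical
  have hsub : LinearMap.ker T ≤
      Submodule.span ℂ ((S.image (hT.eigenvectorBasis hm) : Finset E) : Set E) := by
    intro x hx
    have hx0 : T x = 0 := hx
    have hcoef : ∀ i : Fin m, i ∉ S → ⟪hT.eigenvectorBasis hm i, x⟫_ℂ = 0 := by
      intro i hi
      have hμ : hT.eigenvalues hm i ≠ 0 := fun h => hi (hS i h)
      have h1 : ((hT.eigenvalues hm i : ℂ)) * ⟪hT.eigenvectorBasis hm i, x⟫_ℂ = 0 := by
        calc ((hT.eigenvalues hm i : ℂ)) * ⟪hT.eigenvectorBasis hm i, x⟫_ℂ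
            = ⟪(hT.eigenvalues hm i : ℂ) • hT.eigenvectorBasis hm i, x⟫_ℂ := by
              rw [inner_smul_left, Complex.conj_ofReal]
          _ = ⟪T (hT.eigenvectorBasis hm i), x⟫_ℂ := by
              rw [hT.apply_eigenvectorBasis hm i] <;> norm_cast
          _ = ⟪hT.eigenvectorBasis hm i, T x⟫_ℂ := hT _ x
          _ = 0 := by rw [hx0, inner_zero_right]
      rcases mul_eq_zero.mp h1 with h | h
      · exact absurd (by exact_mod_cast h) hμ
      · exact h
    have hrepr : ∑ i ∈ S, ⟪hT.eigenvectorBasis hm i, x⟫_ℂ • hT.eigenvectorBasis hm i = x :=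
      (Finset.sum_subset (Finset.subset_univ S)
        (fun i _ hi => by rw [hcoef i hi, zero_smul])).trans
        ((hT.eigenvectorBasis hm).sum_repr' x)
    rw [← hrepr]
    refine Submodule.sum_mem _ fun i hi => Submodule.smul_mem _ _ (Submodule.subset_span ?_)
    simp only [Finset.coe_image, Set.mem_image, Finset.mem_coe]
    exact ⟨i, hi, rfl⟩
  calc finrank ℂ (LinearMap.ker T)
      ≤ finrank ℂ (Submodule.span ℂ
          ((S.image (hT.eigenvectorBasis hm) : Finset E) : Set E)) :=
        Submodule.finrank_mono hsub
    _ ≤ (S.image (hT.eigenvectorBasis hm)).card := finrank_span_finset_le_card _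
    _ ≤ S.card := Finset.card_image_le

lemma eigenvalues_gram_nonneg (A : E →ₗ[ℂ] F) (hm : finrank ℂ E = m) (i : Fin m) :
    0 ≤ (gram_isSymmetric A).eigenvalues hm i := by
  have h1 : ⟪(gram_isSymmetric A).eigenvectorBasis hm i,
      gram A ((gram_isSymmetric A).eigenvectorBasis hm i)⟫_ℂ =
      (((gram_isSymmetric A).eigenvalues hm i : ℂ)) := by
    rw [(gram_isSymmetric A).apply_eigenvectorBasis hm i, inner_smul_right,
      inner_basis_self, mul_one]
    rfl
  have h2 : ⟪(gram_isSymmetric A).eigenvectorBasis hm i,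
      gram A ((gram_isSymmetric A).eigenvectorBasis hm i)⟫_ℂ =
      ((‖A ((gram_isSymmetric A).eigenvectorBasis hm i)‖ ^ 2 : ℝ) : ℂ) := by
    rw [inner_gram, @inner_self_eq_norm_sq_to_K ℂ]
    norm_cast
  have hr : (gram_isSymmetric A).eigenvalues hm i =
      ‖A ((gram_isSymmetric A).eigenvectorBasis hm i)‖ ^ 2 := by
    exact_mod_cast h1.symm.trans h2
  rw [hr]
  positivity

/-- Key inequality: the heat trace of a Gram operator dominates the kernel dimension. -/
lemma key1 (t : ℝ) (A : E →ₗ[ℂ] F) :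
    (finrank ℂ (LinearMap.ker (gram A)) : ℂ) ≤ htr t (gram A) := by
  classical
  have hm : finrank ℂ E = finrank ℂ E := rfl
  have hsum : htr t (gram A) = ((∑ i : Fin (finrank ℂ E),
      Real.exp (-t * (gram_isSymmetric A).eigenvalues hm i) : ℝ) : ℂ) := by
    rw [htr_eq_sum_exp (gram_isSymmetric A) hm t]
    push_cast
    refine Finset.sum_congr rfl fun i _ => rfl
  set S : Finset (Fin (finrank ℂ E)) :=
    Finset.univ.filter (fun i => (gram_isSymmetric A).eigenvalues hm i = 0) with hSdef
  have hker : finrank ℂ (LinearMap.ker (gram A)) ≤ S.card :=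
    finrank_ker_le_card (gram_isSymmetric A) hm S (fun i h => by simp [hSdef, h])
  have hreal : (S.card : ℝ) ≤ ∑ i : Fin (finrank ℂ E),
      Real.exp (-t * (gram_isSymmetric A).eigenvalues hm i) := by
    have h1 : ∑ i ∈ S, Real.exp (-t * (gram_isSymmetric A).eigenvalues hm i) = (S.card : ℝ) := by
      rw [Finset.sum_congr rfl (fun i hi => by
        rw [(Finset.mem_filter.mp hi).2, mul_zero, Real.exp_zero])]
      simp
    rw [← h1]
    exact Finset.sum_le_sum_of_subset_of_nonneg (Finset.subset_univ S)
      (fun i _ _ => (Real.exp_pos _).le)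
  rw [hsum]
  have hcast : ((finrank ℂ (LinearMap.ker (gram A)) : ℂ)) =
      (((finrank ℂ (LinearMap.ker (gram A)) : ℝ)) : ℂ) := by norm_cast
  rw [hcast, Complex.real_le_real]
  exact le_trans (by exact_mod_cast hker) hreal

end Eigen

-- `exp Z * W = W` when `Z * W = 0`.
lemma exp_mul_eq_of_mul_eq_zero (Z W : E →L[ℂ] E) (h : Z * W = 0) :
    NormedSpace.exp Z * W = W := by
  have hs : Summable fun n : ℕ => ((n.factorial : ℂ))⁻¹ • Z ^ n :=
    NormedSpace.expSeries_summable' _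
  rw [NormedSpace.exp_eq_tsum ℂ, ← hs.tsum_mul_right W]
  have hzero : ∀ n : ℕ, n ≠ 0 → (((n.factorial : ℂ))⁻¹ • Z ^ n) * W = 0 := by
    intro n hn
    obtain ⟨k, rfl⟩ := Nat.exists_eq_succ_of_ne_zero hn
    rw [smul_mul_assoc, pow_succ, mul_assoc, h, mul_zero, smul_zero]
  rw [tsum_eq_single 0 hzero]
  simp

lemma mul_exp_eq_of_mul_eq_zero (Z W : E →L[ℂ] E) (h : W * Z = 0) :
    W * NormedSpace.exp Z = W := by
  have hs : Summable fun n : ℕ => ((n.factorial : ℂ))⁻¹ • Z ^ n :=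
    NormedSpace.expSeries_summable' _
  rw [NormedSpace.exp_eq_tsum ℂ, ← hs.tsum_mul_left W]
  have hzero : ∀ n : ℕ, n ≠ 0 → W * (((n.factorial : ℂ))⁻¹ • Z ^ n) = 0 := by
    intro n hn
    obtain ⟨k, rfl⟩ := Nat.exists_eq_succ_of_ne_zero hn
    rw [mul_smul_comm, pow_succ', ← mul_assoc, h, zero_mul, smul_zero]
  rw [tsum_eq_single 0 hzero]
  simp

lemma exp_add_of_mul_eq_zero (X Y : E →L[ℂ] E) (hXY : X * Y = 0) (hYX : Y * X = 0) :
    NormedSpace.exp (X + Y) = NormedSpace.exp X + NormedSpace.exp Y - 1 := by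
  have hc : Commute X Y := by rw [Commute, SemiconjBy, hXY, hYX]
  rw [NormedSpace.exp_add_of_commute_of_mem_ball (𝕂 := ℂ) hc
    ((NormedSpace.expSeries_radius_eq_top ℂ (E →L[ℂ] E)).symm ▸ edist_lt_top _ _)
    ((NormedSpace.expSeries_radius_eq_top ℂ (E →L[ℂ] E)).symm ▸ edist_lt_top _ _)]
  have h1 : X * (NormedSpace.exp Y - 1) = 0 := by
    rw [mul_sub, mul_exp_eq_of_mul_eq_zero Y X hXY, mul_one, sub_self]
  have h2 : NormedSpace.exp X * (NormedSpace.exp Y - 1) = NormedSpace.exp Y - 1 :=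
    exp_mul_eq_of_mul_eq_zero X _ h1
  have h3 : (1 : E →L[ℂ] E) + (NormedSpace.exp Y - 1) = NormedSpace.exp Y := by abel
  calc NormedSpace.exp X * NormedSpace.exp Y
      = NormedSpace.exp X * (1 + (NormedSpace.exp Y - 1)) := by rw [h3]
    _ = NormedSpace.exp X + (NormedSpace.exp Y - 1) := by rw [mul_add, mul_one, h2]
    _ = NormedSpace.exp X + NormedSpace.exp Y - 1 := by abel

lemma htr_add_of_comp_eq_zero (t : ℝ) (B C : E →ₗ[ℂ] E)
    (hBC : B.comp C = 0) (hCB : C.comp B = 0) :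
    htr t (B + C) = htr t B + htr t C - (finrank ℂ E : ℂ) := by
  set X := (-(t : ℂ)) • LinearMap.toContinuousLinearMap B with hX
  set Y := (-(t : ℂ)) • LinearMap.toContinuousLinearMap C with hY
  have hmul : ∀ (P Q : E →ₗ[ℂ] E), P.comp Q = 0 →
      ((-(t : ℂ)) • LinearMap.toContinuousLinearMap P) *
        ((-(t : ℂ)) • LinearMap.toContinuousLinearMap Q) = 0 := by
    intro P Q hPQ
    ext x
    have hz := LinearMap.ext_iff.mp hPQ x
    simp only [LinearMap.comp_apply, LinearMap.zero_apply] at hz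
    simp only [ContinuousLinearMap.mul_apply, ContinuousLinearMap.smul_apply,
      ContinuousLinearMap.zero_apply]
    have hcoe : ∀ (R : E →ₗ[ℂ] E) (y : E), (LinearMap.toContinuousLinearMap R) y = R y :=
      fun R y => rfl
    rw [hcoe, map_smul, hcoe, hz, smul_zero, smul_zero]
  have hXY : X * Y = 0 := hmul B C hBC
  have hYX : Y * X = 0 := hmul C B hCB
  have hadd : (-(t : ℂ)) • LinearMap.toContinuousLinearMap (B + C) = X + Y := by
    rw [map_add, smul_add]
  rw [htr, hadd, exp_add_of_mul_eq_zero X Y hXY hYX]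
  have : (NormedSpace.exp X + NormedSpace.exp Y - 1).toLinearMap =
      (NormedSpace.exp X).toLinearMap + (NormedSpace.exp Y).toLinearMap - 1 := rfl
  rw [this, map_sub, map_add, LinearMap.trace_one]
  rfl

lemma ker_add_gram (A₁ : F →ₗ[ℂ] E) (A₂ : E →ₗ[ℂ] G) :
    LinearMap.ker (gram A₂ + A₁.comp (LinearMap.adjoint A₁)) =
      LinearMap.ker (gram A₂) ⊓ LinearMap.ker (A₁.comp (LinearMap.adjoint A₁)) := by
  ext x
  simp only [LinearMap.mem_ker, Submodule.mem_inf, LinearMap.add_apply]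
  constructor
  · intro h
    have hinner : ⟪x, gram A₂ x⟫_ℂ + ⟪x, A₁ (LinearMap.adjoint A₁ x)⟫_ℂ = 0 := by
      rw [← inner_add_right]
      have : gram A₂ x + A₁ (LinearMap.adjoint A₁ x) = 0 := by
        simpa [LinearMap.comp_apply] using h
      rw [this, inner_zero_right]
    have h1 : ⟪x, gram A₂ x⟫_ℂ = ((‖A₂ x‖ ^ 2 : ℝ) : ℂ) := by
      rw [inner_gram, @inner_self_eq_norm_sq_to_K ℂ]; norm_cast
    have h2 : ⟪x, A₁ (LinearMap.adjoint A₁ x)⟫_ℂ =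
        ((‖LinearMap.adjoint A₁ x‖ ^ 2 : ℝ) : ℂ) := by
      rw [← LinearMap.adjoint_inner_left, @inner_self_eq_norm_sq_to_K ℂ]; norm_cast
    rw [h1, h2, ← Complex.ofReal_add] at hinner
    have hreal : ‖A₂ x‖ ^ 2 + ‖LinearMap.adjoint A₁ x‖ ^ 2 = 0 := by exact_mod_cast hinner
    have hA2 : ‖A₂ x‖ ^ 2 = 0 := by nlinarith [sq_nonneg ‖A₂ x‖, sq_nonneg ‖LinearMap.adjoint A₁ x‖]
    have hA1 : ‖LinearMap.adjoint A₁ x‖ ^ 2 = 0 := by nlinarith [sq_nonneg ‖A₂ x‖]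
    have hA2' : A₂ x = 0 := by
      rw [← norm_eq_zero]; nlinarith [norm_nonneg (A₂ x)]
    have hA1' : LinearMap.adjoint A₁ x = 0 := by
      rw [← norm_eq_zero]; nlinarith [norm_nonneg (LinearMap.adjoint A₁ x)]
    constructor
    · show (LinearMap.adjoint A₂).comp A₂ x = 0
      simp [LinearMap.comp_apply, hA2']
    · simp [LinearMap.comp_apply, hA1']
  · rintro ⟨h1, h2⟩
    rw [h1, h2, add_zero]

lemma ker_sup_eq_top (A₁ : F →ₗ[ℂ] E) (A₂ : E →ₗ[ℂ] G)
    (h : A₂.comp A₁ = 0) :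
    LinearMap.ker (gram A₂) ⊔ LinearMap.ker (A₁.comp (LinearMap.adjoint A₁)) = ⊤ := by
  have hC : LinearMap.ker (A₁.comp (LinearMap.adjoint A₁)) = (LinearMap.range A₁)ᗮ := by
    have : A₁.comp (LinearMap.adjoint A₁) = gram (LinearMap.adjoint A₁) := by
      rw [gram, LinearMap.adjoint_adjoint]
    rw [this, ker_gram, ker_adjoint]
  have hB : LinearMap.range A₁ ≤ LinearMap.ker (gram A₂) := by
    rw [ker_gram]
    rintro x ⟨y, rfl⟩
    have := LinearMap.ext_iff.mp h y
    simpa [LinearMap.comp_apply] using this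
  rw [hC]
  have htop := Submodule.sup_orthogonal_of_hasOrthogonalProjection (K := LinearMap.range A₁)
  rw [eq_top_iff, ← htop]
  exact sup_le_sup_right hB _



lemma finrank_ker_add (A₁ : F →ₗ[ℂ] E) (A₂ : E →ₗ[ℂ] G) (h : A₂.comp A₁ = 0) :
    finrank ℂ (LinearMap.ker (gram A₂ + A₁.comp (LinearMap.adjoint A₁))) + finrank ℂ E =
      finrank ℂ (LinearMap.ker (gram A₂)) +
        finrank ℂ (LinearMap.ker (A₁.comp (LinearMap.adjoint A₁))) := by
  have h1 := Submodule.finrank_sup_add_finrank_inf_eq (LinearMap.ker (gram A₂))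
    (LinearMap.ker (A₁.comp (LinearMap.adjoint A₁)))
  rw [ker_sup_eq_top A₁ A₂ h, finrank_top] at h1
  rw [ker_add_gram A₁ A₂]
  omega

lemma psi_eq_phi (t : ℝ) (A : E →ₗ[ℂ] F) :
    htr t (A.comp (LinearMap.adjoint A)) -
        (finrank ℂ (LinearMap.ker (A.comp (LinearMap.adjoint A))) : ℂ) =
      htr t (gram A) - (finrank ℂ (LinearMap.ker (gram A)) : ℂ) := by
  have h1 := htr_sub_dim t A
  have h2 := finrank_ker_gram_add_rank A
  have h3 : finrank ℂ (LinearMap.ker (A.comp (LinearMap.adjoint A))) +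
      finrank ℂ (LinearMap.range A) = finrank ℂ F := by
    rw [comp_adjoint_eq_gram]
    exact finrank_ker_gram_adjoint_add_rank A
  have hnat : finrank ℂ (LinearMap.ker (A.comp (LinearMap.adjoint A))) + finrank ℂ E =
      finrank ℂ (LinearMap.ker (gram A)) + finrank ℂ F := by omega
  have hc : (finrank ℂ (LinearMap.ker (A.comp (LinearMap.adjoint A))) : ℂ) +
      (finrank ℂ E : ℂ) =
      (finrank ℂ (LinearMap.ker (gram A)) : ℂ) + (finrank ℂ F : ℂ) := by exact_mod_cast hnat
  linear_combination -h1 - hc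

lemma a_split (t : ℝ) (A₁ : F →ₗ[ℂ] E) (A₂ : E →ₗ[ℂ] G) (h : A₂.comp A₁ = 0) :
    htr t (gram A₂ + A₁.comp (LinearMap.adjoint A₁)) -
        (finrank ℂ (LinearMap.ker (gram A₂ + A₁.comp (LinearMap.adjoint A₁))) : ℂ) =
      (htr t (gram A₂) - (finrank ℂ (LinearMap.ker (gram A₂)) : ℂ)) +
        (htr t (A₁.comp (LinearMap.adjoint A₁)) -
          (finrank ℂ (LinearMap.ker (A₁.comp (LinearMap.adjoint A₁))) : ℂ)) := by
  have hz : ∀ y, A₂ (A₁ y) = 0 := by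
    intro y
    have := LinearMap.ext_iff.mp h y
    simpa [LinearMap.comp_apply] using this
  have hBC : (gram A₂).comp (A₁.comp (LinearMap.adjoint A₁)) = 0 := by
    ext x
    simp [gram, LinearMap.comp_apply, hz]
  have hadj : (LinearMap.adjoint A₁).comp (LinearMap.adjoint A₂) = 0 := by
    have : LinearMap.adjoint (A₂.comp A₁) = (LinearMap.adjoint A₁).comp (LinearMap.adjoint A₂) :=
      LinearMap.adjoint_comp A₂ A₁
    rw [← this, h, map_zero]
  have hz' : ∀ y, (LinearMap.adjoint A₁) ((LinearMap.adjoint A₂) y) = 0 := by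
    intro y
    have := LinearMap.ext_iff.mp hadj y
    simpa [LinearMap.comp_apply] using this
  have hCB : (A₁.comp (LinearMap.adjoint A₁)).comp (gram A₂) = 0 := by
    ext x
    simp [gram, LinearMap.comp_apply, hz']
  rw [htr_add_of_comp_eq_zero t _ _ hBC hCB]
  have hk := finrank_ker_add A₁ A₂ h
  have hkc : (finrank ℂ (LinearMap.ker (gram A₂ + A₁.comp (LinearMap.adjoint A₁))) : ℂ) +
      (finrank ℂ E : ℂ) = (finrank ℂ (LinearMap.ker (gram A₂)) : ℂ) +
      (finrank ℂ (LinearMap.ker (A₁.comp (LinearMap.adjoint A₁))) : ℂ) := by exact_mod_cast hk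
  linear_combination -hkc

end HeatAux

/-- **Heat trace inequality.**
Let `(V^j, d^j)_{j=0}^{n}` be a cochain complex of finite-dimensional complex inner
product spaces (so `d^{j+1} ∘ d^j = 0`, with the conventions `d^{-1} = 0`, `d^n = 0`),
with Laplacians `Δ_j = (d^j)* d^j + d^{j-1} (d^{j-1})*`.  Then for every `t > 0` and
every `0 ≤ N ≤ n`,
`∑_{j=0}^{N} (−1)^{N−j} Tr (exp (−t Δ_j)) ≥ ∑_{j=0}^{N} (−1)^{N−j} dim ker Δ_j`
(in particular the left-hand side is a real number). -/
theorem heat_trace_alternating_sum_ge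
    (n : ℕ) (hn : 0 < n)
    (V : ℕ → Type*) [∀ j, NormedAddCommGroup (V j)]
    [∀ j, InnerProductSpace ℂ (V j)] [∀ j, FiniteDimensional ℂ (V j)]
    (d : ∀ j, V j →ₗ[ℂ] V (j + 1))
    (hcomplex : ∀ j, j + 2 ≤ n → (d (j + 1)).comp (d j) = 0)
    (hdn : d n = 0) :
    ∀ t : ℝ, 0 < t → ∀ N ≤ n,
      ((∑ j ∈ Finset.range (N + 1), (-1 : ℤ) ^ (N - j) *
          (Module.finrank ℂ (LinearMap.ker (hodgeLaplacian V d j)) : ℤ) : ℤ) : ℂ) ≤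
        ∑ j ∈ Finset.range (N + 1), (-1 : ℂ) ^ (N - j) * heatTrace V d t j := by
  intro t ht N hN'
  classical
  have hkey : ∀ N, N ≤ n → ∑ j ∈ Finset.range (N + 1), (-1 : ℂ) ^ (N - j) *
      (heatTrace V d t j - (finrank ℂ (LinearMap.ker (hodgeLaplacian V d j)) : ℂ)) =
      HeatAux.htr t (HeatAux.gram (d N)) -
        (finrank ℂ (LinearMap.ker (HeatAux.gram (d N))) : ℂ) := by
    intro N
    induction N with
    | zero =>
      intro _
      have h0 : hodgeLaplacian V d 0 = HeatAux.gram (d 0) := rfl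
      have h0' : heatTrace V d t 0 = HeatAux.htr t (HeatAux.gram (d 0)) := rfl
      simp [h0, h0']
      rw [h0]
    | succ N ih =>
      intro hN1
      have hN : N ≤ n := Nat.le_of_succ_le hN1
      have hcomp : (d (N + 1)).comp (d N) = 0 := by
        rcases lt_or_eq_of_le hN1 with hlt | heq
        · exact hcomplex N (by omega)
        · have : d (N + 1) = 0 := by rw [heq]; exact hdn
          rw [this, LinearMap.zero_comp]
      rw [Finset.sum_range_succ]
      have hstep : ∑ j ∈ Finset.range (N + 1), (-1 : ℂ) ^ (N + 1 - j) *
          (heatTrace V d t j - (finrank ℂ (LinearMap.ker (hodgeLaplacian V d j)) : ℂ)) =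
          - ∑ j ∈ Finset.range (N + 1), (-1 : ℂ) ^ (N - j) *
          (heatTrace V d t j - (finrank ℂ (LinearMap.ker (hodgeLaplacian V d j)) : ℂ)) := by
        rw [← Finset.sum_neg_distrib]
        refine Finset.sum_congr rfl fun j hj => ?_
        have hj' : j ≤ N := by
          have := Finset.mem_range.mp hj; omega
        have hpow : N + 1 - j = (N - j) + 1 := by omega
        rw [hpow, pow_succ]
        ring
      rw [hstep, ih hN]
      have hΔ : hodgeLaplacian V d (N + 1) =
          HeatAux.gram (d (N + 1)) + (d N).comp (LinearMap.adjoint (d N)) := rfl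
      have hht : heatTrace V d t (N + 1) =
          HeatAux.htr t (HeatAux.gram (d (N + 1)) + (d N).comp (LinearMap.adjoint (d N))) := rfl
      have hsplit := HeatAux.a_split t (d N) (d (N + 1)) hcomp
      have hphi := HeatAux.psi_eq_phi t (d N)
      have hc : heatTrace V d t (N + 1) -
          (finrank ℂ (LinearMap.ker (hodgeLaplacian V d (N + 1))) : ℂ) =
          (HeatAux.htr t (HeatAux.gram (d (N + 1))) -
            (finrank ℂ (LinearMap.ker (HeatAux.gram (d (N + 1)))) : ℂ)) +
          (HeatAux.htr t (HeatAux.gram (d N)) -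
            (finrank ℂ (LinearMap.ker (HeatAux.gram (d N))) : ℂ)) := by
        rw [hht, hΔ, hsplit, hphi]
      simp only [Nat.sub_self, pow_zero, one_mul]
      rw [hc]
      ring
  have hsum := hkey N hN'
  have hpos : (0 : ℂ) ≤ HeatAux.htr t (HeatAux.gram (d N)) -
      (finrank ℂ (LinearMap.ker (HeatAux.gram (d N))) : ℂ) :=
    sub_nonneg.mpr (HeatAux.key1 t (d N))
  have hca : ((∑ j ∈ Finset.range (N + 1), (-1 : ℤ) ^ (N - j) *
      (Module.finrank ℂ (LinearMap.ker (hodgeLaplacian V d j)) : ℤ) : ℤ) : ℂ)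
      = ∑ j ∈ Finset.range (N + 1), (-1 : ℂ) ^ (N - j) *
        (finrank ℂ (LinearMap.ker (hodgeLaplacian V d j)) : ℂ) := by
    push_cast
    rfl
  rw [hca, ← sub_nonneg, ← Finset.sum_sub_distrib]
  have heq : ∑ j ∈ Finset.range (N + 1), ((-1 : ℂ) ^ (N - j) * heatTrace V d t j -
      (-1 : ℂ) ^ (N - j) * (finrank ℂ (LinearMap.ker (hodgeLaplacian V d j)) : ℂ)) =
      ∑ j ∈ Finset.range (N + 1), (-1 : ℂ) ^ (N - j) *
      (heatTrace V d t j - (finrank ℂ (LinearMap.ker (hodgeLaplacian V d j)) : ℂ)) :=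
    Finset.sum_congr rfl fun j _ => (mul_sub _ _ _).symm
  rw [heq, hsum]
  exact hpos
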